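/- Let C be a subspace of a finite-dimensional Hilbert space H with orthogonal projection P_C, and let E be an operator on H. If for every pair of orthogonal vectors ψ₁, ψ₂ ∈ C the vectors Eψ₁ and ψ₂ are orthogonal, then there exists a scalar λ such that ⟨ψ₁, Eψ₂⟩ = λ⟨ψ₁, ψ₂⟩ for all ψ₁, ψ₂ ∈ C. -/

import Mathlib

open InnerProductSpace

/-- If `E` maps orthogonal pairs within the code `C` to orthogonal pairs, then `E`
acts as a scalar on `C` in the quadratic-form sense. -/
theorem detectable_of_orthogonality_preserving
    {H : Type*} [NormedAddCommGroup H] [InnerProductSpace ℂ H]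
    [FiniteDimensional ℂ H] (C : Submodule ℂ H) (hC : 1 ≤ Module.finrank ℂ C)
    (E : H →ₗ[ℂ] H)
    (h : ∀ ψ₁ ∈ C, ∀ ψ₂ ∈ C, ⟪ψ₁, ψ₂⟫_ℂ = 0 → ⟪ψ₂, E ψ₁⟫_ℂ = 0) :
    ∃ lam : ℂ, ∀ ψ₁ ∈ C, ∀ ψ₂ ∈ C, ⟪ψ₁, E ψ₂⟫_ℂ = lam * ⟪ψ₁, ψ₂⟫_ℂ := by
  classical
  set g : H → ℂ := fun y => ⟪y, E y⟫_ℂ / ⟪y, y⟫_ℂ with hg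
  -- Key A: E acts as the scalar `g y` on each nonzero `y ∈ C`, tested against `C`.
  have keyA : ∀ y ∈ C, y ≠ 0 → ∀ x ∈ C, ⟪x, E y⟫_ℂ = g y * ⟪x, y⟫_ℂ := by
    intro y hy hy0 x hx
    have hyy : ⟪y, y⟫_ℂ ≠ 0 := inner_self_ne_zero.mpr hy0
    set a : ℂ := ⟪y, x⟫_ℂ / ⟪y, y⟫_ℂ with ha
    set w : H := x - a • y with hw
    have hwC : w ∈ C := sub_mem hx (Submodule.smul_mem C a hy)
    have hyw : ⟪y, w⟫_ℂ = 0 := by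
      simp only [hw, inner_sub_right, inner_smul_right, ha]
      field_simp
      ring
    have h1 : ⟪w, E y⟫_ℂ = 0 := h y hy w hwC hyw
    have hwy : ⟪w, y⟫_ℂ = 0 := by
      rw [← inner_conj_symm, hyw, map_zero]
    have hx' : x = w + a • y := by simp [hw]
    rw [hx', inner_add_left, inner_add_left, inner_smul_left, inner_smul_left, h1, hwy]
    simp only [hg]
    field_simp
    ring
  -- Key B: `g` is constant on nonzero elements of `C`.
  have keyB : ∀ y ∈ C, y ≠ 0 → ∀ z ∈ C, z ≠ 0 → g y = g z := by
    intro y hy hy0 z hz hz0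
    have hzz : ⟪z, z⟫_ℂ ≠ 0 := inner_self_ne_zero.mpr hz0
    have hyy : ⟪y, y⟫_ℂ ≠ 0 := inner_self_ne_zero.mpr hy0
    by_cases hpar : ∃ c : ℂ, y = c • z
    · obtain ⟨c, rfl⟩ := hpar
      have hc : c ≠ 0 := by rintro rfl; simp at hy0
      have hc' : (starRingEnd ℂ) c ≠ 0 := by simpa using hc
      simp only [hg, map_smul, inner_smul_left, inner_smul_right]
      field_simp
    · push_neg at hpar
      have hsum0 : y + z ≠ 0 := by
        intro hsum
        exact hpar (-1) (by rw [neg_one_smul, ← eq_neg_of_add_eq_zero_left hsum])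
      have hsumC : y + z ∈ C := add_mem hy hz
      have claim : ∀ x ∈ C,
          g (y + z) * ⟪x, y + z⟫_ℂ = g y * ⟪x, y⟫_ℂ + g z * ⟪x, z⟫_ℂ := by
        intro x hx
        rw [← keyA (y + z) hsumC hsum0 x hx, ← keyA y hy hy0 x hx,
          ← keyA z hz hz0 x hx, map_add, inner_add_right]
      -- First test vector: the part of y orthogonal to z.
      have step1 : g (y + z) = g y := by
        set c : ℂ := ⟪z, y⟫_ℂ / ⟪z, z⟫_ℂ with hc
        set x₁ : H := y - c • z with hx₁
        have hx₁C : x₁ ∈ C := sub_mem hy (Submodule.smul_mem C c hz)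
        have hzx₁ : ⟪z, x₁⟫_ℂ = 0 := by
          simp only [hx₁, inner_sub_right, inner_smul_right, hc]
          field_simp
          ring
        have hx₁z : ⟪x₁, z⟫_ℂ = 0 := by rw [← inner_conj_symm, hzx₁, map_zero]
        have hx₁y : ⟪x₁, y⟫_ℂ ≠ 0 := by
          intro h0
          have hxx : ⟪x₁, x₁⟫_ℂ = 0 := by
            calc ⟪x₁, x₁⟫_ℂ = ⟪x₁, y - c • z⟫_ℂ := by rw [← hx₁]
              _ = ⟪x₁, y⟫_ℂ - c * ⟪x₁, z⟫_ℂ := by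
                  rw [inner_sub_right, inner_smul_right]
              _ = 0 := by rw [h0, hx₁z]; ring
          have : x₁ = 0 := inner_self_eq_zero.mp hxx
          exact hpar c (by rwa [← sub_eq_zero])
        have := claim x₁ hx₁C
        rw [inner_add_right, hx₁z] at this
        simp only [add_zero, mul_zero] at this
        exact mul_right_cancel₀ hx₁y this
      -- Second test vector: the part of z orthogonal to y.
      have step2 : g (y + z) = g z := by
        set d : ℂ := ⟪y, z⟫_ℂ / ⟪y, y⟫_ℂ with hd
        set x₂ : H := z - d • y with hx₂
        have hx₂C : x₂ ∈ C := sub_mem hz (Submodule.smul_mem C d hy)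
        have hyx₂ : ⟪y, x₂⟫_ℂ = 0 := by
          simp only [hx₂, inner_sub_right, inner_smul_right, hd]
          field_simp
          ring
        have hx₂y : ⟪x₂, y⟫_ℂ = 0 := by rw [← inner_conj_symm, hyx₂, map_zero]
        have hx₂z : ⟪x₂, z⟫_ℂ ≠ 0 := by
          intro h0
          have hxx : ⟪x₂, x₂⟫_ℂ = 0 := by
            calc ⟪x₂, x₂⟫_ℂ = ⟪x₂, z - d • y⟫_ℂ := by rw [← hx₂]
              _ = ⟪x₂, z⟫_ℂ - d * ⟪x₂, y⟫_ℂ := by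
                  rw [inner_sub_right, inner_smul_right]
              _ = 0 := by rw [h0, hx₂y]; ring
          have hx20 : x₂ = 0 := inner_self_eq_zero.mp hxx
          have hzd : z = d • y := by rwa [← sub_eq_zero]
          have hd0 : d ≠ 0 := fun hd0 => hz0 (by rw [hzd, hd0, zero_smul])
          exact hpar d⁻¹ (by rw [hzd, smul_smul, inv_mul_cancel₀ hd0, one_smul])
        have := claim x₂ hx₂C
        rw [inner_add_right, hx₂y] at this
        simp only [zero_add, mul_zero, zero_add] at this
        exact mul_right_cancel₀ hx₂z this
      rw [← step1, step2]
  -- Pick a nonzero element of C.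
  have hex : ∃ e ∈ C, e ≠ 0 := by
    by_contra h'
    push_neg at h'
    have hbot : C = ⊥ := (Submodule.eq_bot_iff C).mpr h'
    rw [hbot] at hC
    simp [finrank_bot] at hC
  obtain ⟨e, heC, he0⟩ := hex
  refine ⟨g e, fun ψ₁ h₁ ψ₂ h₂ => ?_⟩
  by_cases hψ₂ : ψ₂ = 0
  · simp [hψ₂]
  · rw [keyA ψ₂ h₂ hψ₂ ψ₁ h₁, keyB ψ₂ h₂ hψ₂ e heC he0]
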